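/- Let P = ERM^c with c ≥ m/N. For any v_{-I} ∈ ℝ≥0^{N−m}, let v̄_I ∈ ℝ≥0^m be any m values that are all greater than or equal to the maximal value in v_{-I}. Then δ_m^worst(v_{-I}) = δ_I(v̄_I, v_{-I}); that is, the supremum over v_I ∈ ℝ≥0^m of δ_I(v_I, v_{-I}) is attained by placing all m controlled samples at or above the maximum of the remaining samples, and its value does not depend on the particular choice of such v̄_I. -/

import Mathlib

open MeasureTheory ProbabilityTheory Filter

noncomputable section

noncomputable def sortedVal {N : ℕ} (v : Fin N → ℝ) (i : ℕ) : ℝ :=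
  (Multiset.sort (↑(List.ofFn v)) (· ≤ ·)).getD (N - i) 0

noncomputable def argmaxIdx (S : Finset ℕ) (f : ℕ → ℝ) : ℕ :=
  WithBot.unbotD 0 ((S.filter fun i => ∀ j ∈ S, f j ≤ f i).max)

noncomputable def ERMIdx (c : ℝ) {N : ℕ} (v : Fin N → ℝ) : ℕ :=
  argmaxIdx ((Finset.Icc 1 N).filter fun i => c * N < (i : ℝ))
    (fun i => (i : ℝ) * sortedVal v i)

noncomputable def ERM (c : ℝ) {N : ℕ} (v : Fin N → ℝ) : ℝ :=
  sortedVal v (ERMIdx c v)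

/-- Incentive-awareness measure `δ_I(v_I, v_{-I})` of a price function `P`,
where the coordinates in `I` are the manipulable ones and `v` records both
`v_I` (on `I`) and `v_{-I}` (off `I`). -/
noncomputable def deltaIdx {N : ℕ} (P : (Fin N → ℝ) → ℝ) (I : Finset (Fin N))
    (v : Fin N → ℝ) : ℝ :=
  1 - sInf {p : ℝ | ∃ b : Fin N → ℝ, (∀ j, 0 ≤ b j) ∧
      p = P fun j => if j ∈ I then b j else v j} / P v

/-- Worst-case incentive-awareness measure `δ_m^worst(v_{-I})`
(only the coordinates of `v` off `I` matter). -/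
noncomputable def deltaWorstIdx {N : ℕ} (P : (Fin N → ℝ) → ℝ) (I : Finset (Fin N))
    (v : Fin N → ℝ) : ℝ :=
  sSup {x : ℝ | ∃ u : Fin N → ℝ, (∀ j, 0 ≤ u j) ∧
      x = deltaIdx P I fun j => if j ∈ I then u j else v j}

/-- `Δ_{N,m}^worst` with explicit index set `I`:
expectation of `δ^worst(v_{-I})` over i.i.d. samples from `μ`. -/
noncomputable def DeltaWorstIdx {N : ℕ} (μ : Measure ℝ) (P : (Fin N → ℝ) → ℝ)
    (I : Finset (Fin N)) : ℝ :=
  ∫ v : Fin N → ℝ, deltaWorstIdx P I v ∂(Measure.pi fun _ => μ)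

/-- The index set `{0, …, m-1}` inside `Fin N`. -/
noncomputable def firstIdx (N m : ℕ) : Finset (Fin N) :=
  Finset.univ.filter fun j => (j : ℕ) < m

/-- The worst-case incentive-awareness measure `Δ_{N,m}^worst`. -/
noncomputable def DeltaWorst {N : ℕ} (μ : Measure ℝ) (P : (Fin N → ℝ) → ℝ) (m : ℕ) : ℝ :=
  DeltaWorstIdx μ P (firstIdx N m)

/-- Append-based incentive-awareness measure `δ_I(v_I, v_{-I})` for `P = ERM^c`. -/
noncomputable def deltaIA (c : ℝ) {m n : ℕ} (vI : Fin m → ℝ) (w : Fin n → ℝ) : ℝ :=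
  1 - sInf {p : ℝ | ∃ b : Fin m → ℝ, (∀ i, 0 ≤ b i) ∧ p = ERM c (Fin.append b w)} /
      ERM c (Fin.append vI w)

/-- Append-based worst-case incentive-awareness measure `δ_m^worst(v_{-I})` for `P = ERM^c`. -/
noncomputable def deltaWorstA (c : ℝ) (m : ℕ) {n : ℕ} (w : Fin n → ℝ) : ℝ :=
  sSup {x : ℝ | ∃ vI : Fin m → ℝ, (∀ i, 0 ≤ vI i) ∧ x = deltaIA c vI w}

/-- The index `k* = argmax_{i > cN} i·v_i` selected by `ERM^c` when the top `m`
of the `N` samples are fixed to `+∞` and the remaining `N - m` samples are `w`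
(so `v_i` for `i > m` is the `(i-m)`-th largest entry of `w`);
ties are broken towards the larger index. -/
noncomputable def kStarInf (c : ℝ) (N m : ℕ) {n : ℕ} (w : Fin n → ℝ) : ℕ :=
  argmaxIdx ((Finset.Icc (m + 1) N).filter fun i => c * N < (i : ℝ))
    (fun i => (i : ℝ) * sortedVal w (i - m))

/-- Interim utility `u^K(v, p)` of a bidder with value `v` in a second price
auction with reserve price `p` among `K` i.i.d. bidders from `μ`. -/
noncomputable def uK (μ : Measure ℝ) (K : ℕ) (v p : ℝ) : ℝ :=
  ∫ x : Fin (K - 1) → ℝ, max (v - (List.ofFn x).foldr max p) 0 ∂(Measure.pi fun _ => μ)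

/-- A distribution on `[0, ∞)` has monotone hazard rate (MHR) if it has a density `f`
whose hazard rate `f v / (1 - F v)` is non-decreasing on its support. -/
def IsMHR (μ : Measure ℝ) : Prop :=
  ∃ f : ℝ → ℝ, (∀ x, 0 ≤ f x) ∧ (∀ x, x < 0 → f x = 0) ∧
    μ = MeasureTheory.volume.withDensity (fun x => ENNReal.ofReal (f x)) ∧
    MonotoneOn (fun v => f v / (1 - ProbabilityTheory.cdf μ v)) (Function.support f)

/-- `α`-strong regularity: a density `f`, positive on an interval support contained
in `[0, ∞)`, whose virtual value `φ(x) = x - (1 - F x)/f x` satisfies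
`φ(y) - φ(x) ≥ α (y - x)` whenever `x < y` on the support. -/
def IsAlphaStronglyRegular (α : ℝ) (μ : Measure ℝ) : Prop :=
  ∃ f : ℝ → ℝ, (∀ x, 0 ≤ f x) ∧
    μ = MeasureTheory.volume.withDensity (fun x => ENNReal.ofReal (f x)) ∧
    Set.OrdConnected (Function.support f) ∧
    (∀ x ∈ Function.support f, 0 ≤ x) ∧
    (∀ x ∈ Function.support f, ∀ y ∈ Function.support f, x < y →
      α * (y - x) ≤
        (y - (1 - ProbabilityTheory.cdf μ y) / f y) -
          (x - (1 - ProbabilityTheory.cdf μ x) / f x))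

end


section ClaimTwoAux


lemma countP_eq_card_filter_fin (L : List ℝ) (p : ℝ → Prop) [DecidablePred p] :
    L.countP (fun y => decide (p y))
      = (Finset.univ.filter fun i : Fin L.length => p (L.get i)).card := by
  have h2 : (Finset.univ.filter fun i : Fin L.length => p (L.get i)).card
      = Multiset.countP (fun i => p (L.get i)) (Finset.univ.val) := by
    rw [Finset.card_def, Finset.filter_val, Multiset.countP_eq_card_filter]
  rw [h2]
  have h3 : (Finset.univ.val : Multiset (Fin L.length)) = ↑(List.finRange L.length) := rfl
  rw [h3, Multiset.coe_countP]
  conv_lhs => rw [← List.ofFn_get L, List.ofFn_eq_map, List.countP_map]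
  simp [List.length_ofFn]
  rfl

lemma sorted_mono {L : List ℝ} (hL : L.Pairwise (· ≤ ·)) {i j : ℕ} (hj : j < L.length)
    (hij : i ≤ j) : L.get ⟨i, lt_of_le_of_lt hij hj⟩ ≤ L.get ⟨j, hj⟩ := by
  rcases lt_or_eq_of_le hij with h | h
  · exact hL.rel_get_of_lt h
  · subst h; rfl

lemma sorted_getD_le_iff {L : List ℝ} (hL : L.Pairwise (· ≤ ·)) {a : ℕ} (ha : a < L.length)
    (c : ℝ) : L.getD a 0 ≤ c ↔ a + 1 ≤ L.countP (fun y => decide (y ≤ c)) := by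
  rw [List.getD_eq_getElem L 0 ha, countP_eq_card_filter_fin L (fun y => y ≤ c)]
  constructor
  · intro h
    have := Finset.card_le_card_of_injOn
      (f := fun i : ℕ => (⟨min i a, lt_of_le_of_lt (min_le_right i a) ha⟩ : Fin L.length))
      (s := Finset.range (a+1))
      (t := Finset.univ.filter fun i : Fin L.length => L.get i ≤ c) ?_ ?_
    · simpa using this
    · intro i hi
      simp only [Finset.mem_coe, Finset.mem_filter, Finset.mem_univ, true_and]
      exact le_trans (sorted_mono hL ha (min_le_right i a)) h
    · intro i hi j hj hij
      simp only [Finset.mem_coe, Finset.mem_range] at hi hj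
      have := congrArg Fin.val hij
      simp only at this
      omega
  · intro h
    by_contra hcon
    push_neg at hcon
    have hsub : (Finset.univ.filter fun i : Fin L.length => L.get i ≤ c).card ≤ a := by
      have := Finset.card_le_card_of_injOn (f := fun i : Fin L.length => (i : ℕ))
        (s := Finset.univ.filter fun i : Fin L.length => L.get i ≤ c)
        (t := Finset.range a) ?_ ?_
      · simpa using this
      · intro i hi
        simp only [Finset.mem_coe, Finset.mem_filter, Finset.mem_univ, true_and] at hi
        simp only [Finset.mem_coe, Finset.mem_range]
        by_contra hia
        push_neg at hia
        have : L.get ⟨a, ha⟩ ≤ L.get i := by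
          have := sorted_mono hL i.2 hia
          simpa using this
        have : L[a] ≤ c := le_trans this hi
        exact absurd this (not_le.2 hcon)
      · intro i _ j _ hij
        exact Fin.val_injective hij
    omega

lemma sorted_le_getD_iff {L : List ℝ} (hL : L.Pairwise (· ≤ ·)) {a : ℕ} (ha : a < L.length)
    (c : ℝ) : c ≤ L.getD a 0 ↔ L.length - a ≤ L.countP (fun y => decide (c ≤ y)) := by
  rw [List.getD_eq_getElem L 0 ha, countP_eq_card_filter_fin L (fun y => c ≤ y)]
  constructor
  · intro h
    have := Finset.card_le_card_of_injOn
      (f := fun i : ℕ => (⟨a + min i (L.length - a - 1), by omega⟩ : Fin L.length))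
      (s := Finset.range (L.length - a))
      (t := Finset.univ.filter fun i : Fin L.length => c ≤ L.get i) ?_ ?_
    · simpa using this
    · intro i hi
      simp only [Finset.mem_coe, Finset.mem_filter, Finset.mem_univ, true_and]
      refine le_trans h ?_
      have : a ≤ a + min i (L.length - a - 1) := Nat.le_add_right _ _
      exact sorted_mono hL (by omega) this
    · intro i hi j hj hij
      simp only [Finset.mem_coe, Finset.mem_range] at hi hj
      have := congrArg Fin.val hij
      simp only at this
      omega
  · intro h
    by_contra hcon
    push_neg at hcon
    have hsub : (Finset.univ.filter fun i : Fin L.length => c ≤ L.get i).card ≤ L.length - a - 1 := by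
      have := Finset.card_le_card_of_injOn (f := fun i : Fin L.length => (i : ℕ) - a - 1)
        (s := Finset.univ.filter fun i : Fin L.length => c ≤ L.get i)
        (t := Finset.range (L.length - a - 1)) ?_ ?_
      · simpa using this
      · intro i hi
        simp only [Finset.mem_coe, Finset.mem_filter, Finset.mem_univ, true_and] at hi
        simp only [Finset.mem_coe, Finset.mem_range]
        have hia : a < (i:ℕ) := by
          by_contra hia
          push_neg at hia
          have := sorted_mono hL ha hia
          simp only [List.get_eq_getElem] at this
          have : L.get i ≤ L[a] := by
            convert this using 2; rfl
          exact absurd (le_trans hi this) (not_le.2 hcon)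
        have := i.2
        omega
      · intro i hi j hj hij
        simp only [Finset.mem_coe, Finset.mem_filter, Finset.mem_univ, true_and] at hi hj
        have hia : a < (i:ℕ) := by
          by_contra hia
          push_neg at hia
          have h2 := sorted_mono hL ha hia
          have : L.get i ≤ L[a] := by convert h2 using 2; rfl
          exact absurd (le_trans hi this) (not_le.2 hcon)
        have hja : a < (j:ℕ) := by
          by_contra hja
          push_neg at hja
          have h2 := sorted_mono hL ha hja
          have : L.get j ≤ L[a] := by convert h2 using 2; rfl
          exact absurd (le_trans hj this) (not_le.2 hcon)
        have hij2 : (i:ℕ) - a - 1 = (j:ℕ) - a - 1 := hij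
        have : (i:ℕ) = (j:ℕ) := by omega
        exact Fin.val_injective this
    omega

lemma argmax_spec (S : Finset ℕ) (f : ℕ → ℝ) (hS : S.Nonempty) :
    argmaxIdx S f ∈ S ∧ (∀ j ∈ S, f j ≤ f (argmaxIdx S f)) ∧
      (∀ j ∈ S, f (argmaxIdx S f) ≤ f j → j ≤ argmaxIdx S f) := by
  obtain ⟨a, ha, hmax⟩ := S.exists_max_image f hS
  have haT : a ∈ S.filter fun i => ∀ j ∈ S, f j ≤ f i := by
    rw [Finset.mem_filter]; exact ⟨ha, hmax⟩
  obtain ⟨b, hb⟩ := Finset.max_of_nonempty ⟨a, haT⟩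
  have hA : argmaxIdx S f = b := by rw [argmaxIdx, hb]; exact WithBot.unbotD_coe _ _
  have hmem := Finset.mem_of_max hb
  rw [Finset.mem_filter] at hmem
  rw [hA]
  refine ⟨hmem.1, hmem.2, ?_⟩
  intro j hj hfj
  have hjT : j ∈ S.filter fun i => ∀ j ∈ S, f j ≤ f i := by
    rw [Finset.mem_filter]
    exact ⟨hj, fun j' hj' => le_trans (hmem.2 j' hj') hfj⟩
  have := Finset.le_max hjT
  rw [hb] at this
  exact_mod_cast this

lemma step_abstract (Nn mm : ℕ) (C : Finset ℕ) (u u' : ℕ → ℝ)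
    (hNC : Nn ∈ C)
    (hCsub : ∀ i ∈ C, mm + 1 ≤ i ∧ i ≤ Nn)
    (hCconv : ∀ i ∈ C, ∀ t, i ≤ t → t ≤ Nn → t ∈ C)
    (hu0 : ∀ i ∈ C, 0 ≤ u i) (hu'0 : ∀ i ∈ C, 0 ≤ u' i)
    (h2 : ∀ i ∈ C, u i ≤ u' i)
    (h3 : ∀ i ∈ C, i + 1 ≤ Nn → u' (i+1) ≤ u i)
    (h4 : ∃ p, p ≤ Nn ∧ (∀ i ∈ C, i < p → u i = u' (i+1)) ∧ (∀ i ∈ C, p < i → u i = u' i)) :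
    u (argmaxIdx C (fun i => (i:ℝ) * u i)) ≤ u' (argmaxIdx C (fun i => (i:ℝ) * u' i)) := by
  have hNe : C.Nonempty := ⟨Nn, hNC⟩
  obtain ⟨iC, iopt, ilast⟩ := argmax_spec C (fun i => (i:ℝ) * u i) hNe
  obtain ⟨kC, kopt, _⟩ := argmax_spec C (fun i => (i:ℝ) * u' i) hNe
  set I := argmaxIdx C (fun i => (i:ℝ) * u i) with hI
  set K := argmaxIdx C (fun i => (i:ℝ) * u' i) with hK

  obtain ⟨p, hpN, h4l, h4r⟩ := h4
  have hI1 : mm + 1 ≤ I := (hCsub I iC).1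
  have hK1 : mm + 1 ≤ K := (hCsub K kC).1
  have hIN : I ≤ Nn := (hCsub I iC).2
  have hKN : K ≤ Nn := (hCsub K kC).2
  have hIpos : (0:ℝ) < I := by exact_mod_cast Nat.lt_of_lt_of_le (Nat.succ_pos mm) hI1
  have hKpos : (0:ℝ) < K := by exact_mod_cast Nat.lt_of_lt_of_le (Nat.succ_pos mm) hK1
  by_cases hip : I < p
  · -- Case I < p
    have hi1N : I + 1 ≤ Nn := by omega
    have hi1C : I + 1 ∈ C := hCconv I iC (I+1) (by omega) hi1N
    have hval : u' (I+1) = u I := (h4l I iC hip).symm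
    have hga : ((I+1 : ℕ):ℝ) * u' (I+1) ≤ (K:ℝ) * u' K := kopt _ hi1C
    rw [hval] at hga
    by_cases hk : K ≤ I + 1
    · have hkr : (K:ℝ) ≤ ((I+1:ℕ):ℝ) := by exact_mod_cast hk
      have h5 : (K:ℝ) * u I ≤ ((I+1:ℕ):ℝ) * u I :=
        mul_le_mul_of_nonneg_right hkr (hu0 _ iC)
      have h6 : (K:ℝ) * u I ≤ (K:ℝ) * u' K := le_trans h5 hga
      exact le_of_mul_le_mul_left h6 hKpos
    · push_neg at hk
      by_contra hcon
      push_neg at hcon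
      have hk1C : K - 1 ∈ C := hCconv I iC (K-1) (by omega) (by omega)
      have h3k : u' K ≤ u (K-1) := by
        have := h3 (K-1) hk1C (by omega)
        rwa [Nat.sub_add_cancel (by omega : 1 ≤ K)] at this
      have hstr : ((K-1:ℕ):ℝ) * u (K-1) < (I:ℝ) * u I := by
        by_contra hge
        push_neg at hge
        have := ilast (K-1) hk1C hge
        omega
      have hc1 : ((K-1:ℕ):ℝ) = (K:ℝ) - 1 := by
        rw [Nat.cast_sub (by omega : 1 ≤ K)]; norm_num
      have hc2 : ((I+1:ℕ):ℝ) = (I:ℝ) + 1 := by push_cast; ring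
      rw [hc1] at hstr
      rw [hc2] at hga
      have hKI : (I:ℝ) + 2 ≤ (K:ℝ) := by exact_mod_cast (by omega : I + 2 ≤ K)
      have hY0 : 0 ≤ u' K := hu'0 _ kC
      have f1 : ((K:ℝ) - 1) * u' K ≤ ((K:ℝ) - 1) * u (K-1) :=
        mul_le_mul_of_nonneg_left h3k (by linarith)
      -- u' K = K * u' K - (K-1) * u' K > (I+1) X - I X = X
      nlinarith [hga, f1, hstr, hcon, hu0 _ iC]
  · -- Case p ≤ I
    push_neg at hip
    have h2i : u I ≤ u' I := h2 _ iC
    by_cases hk : K ≤ I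
    · have h6 : (I:ℝ) * u I ≤ (K:ℝ) * u' K := by
        calc (I:ℝ) * u I ≤ (I:ℝ) * u' I := mul_le_mul_of_nonneg_left h2i (le_of_lt hIpos)
          _ ≤ (K:ℝ) * u' K := kopt _ iC
      have h7 : (K:ℝ) * u I ≤ (I:ℝ) * u I := by
        apply mul_le_mul_of_nonneg_right _ (hu0 _ iC)
        exact_mod_cast hk
      exact le_of_mul_le_mul_left (le_trans h7 h6) hKpos
    · push_neg at hk
      exfalso
      have h4rk : u K = u' K := h4r K kC (by omega)
      have hstr : (K:ℝ) * u K < (I:ℝ) * u I := by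
        by_contra hge
        push_neg at hge
        have := ilast K kC hge
        omega
      have : (I:ℝ) * u I ≤ (K:ℝ) * u' K := le_trans
        (mul_le_mul_of_nonneg_left h2i (le_of_lt hIpos)) (kopt _ iC)
      rw [h4rk] at hstr
      linarith

lemma card_filter_eq_countP {N : ℕ} (p : ℝ → Prop) [DecidablePred p] (v : Fin N → ℝ) :
    (Finset.univ.filter fun j => p (v j)).card
      = (Multiset.sort (↑(List.ofFn v) : Multiset ℝ) (· ≤ ·)).countP (fun y => decide (p y)) := by
  have h1 : (Multiset.sort (↑(List.ofFn v) : Multiset ℝ) (· ≤ ·)).Perm (List.ofFn v) := by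
    rw [← Multiset.coe_eq_coe, Multiset.sort_eq]
  rw [h1.countP_eq, List.ofFn_eq_map, List.countP_map]
  have h2 : (Finset.univ.filter fun j => p (v j)).card
      = Multiset.countP (fun j => p (v j)) (Finset.univ.val) := by
    rw [Finset.card_def, Finset.filter_val, Multiset.countP_eq_card_filter]
  rw [h2]
  have h3 : (Finset.univ.val : Multiset (Fin N)) = ↑(List.finRange N) := rfl
  rw [h3, Multiset.coe_countP]
  rfl

lemma length_sortList {N : ℕ} (v : Fin N → ℝ) :
    (Multiset.sort (↑(List.ofFn v) : Multiset ℝ) (· ≤ ·)).length = N := by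
  rw [Multiset.length_sort, Multiset.coe_card, List.length_ofFn]

lemma sortedVal_le_iff {N : ℕ} (v : Fin N → ℝ) {i : ℕ} (h1 : 1 ≤ i) (h2 : i ≤ N) (c0 : ℝ) :
    sortedVal v i ≤ c0 ↔ N - i + 1 ≤ (Finset.univ.filter fun j => v j ≤ c0).card := by
  have hlen := length_sortList v
  have ha : N - i < (Multiset.sort (↑(List.ofFn v) : Multiset ℝ) (· ≤ ·)).length := by omega
  rw [sortedVal, sorted_getD_le_iff (Multiset.pairwise_sort _ _) ha,
    card_filter_eq_countP (fun y => y ≤ c0) v]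

lemma le_sortedVal_iff {N : ℕ} (v : Fin N → ℝ) {i : ℕ} (h1 : 1 ≤ i) (h2 : i ≤ N) (c0 : ℝ) :
    c0 ≤ sortedVal v i ↔ i ≤ (Finset.univ.filter fun j => c0 ≤ v j).card := by
  have hlen := length_sortList v
  have ha : N - i < (Multiset.sort (↑(List.ofFn v) : Multiset ℝ) (· ≤ ·)).length := by omega
  rw [sortedVal, sorted_le_getD_iff (Multiset.pairwise_sort _ _) ha,
    card_filter_eq_countP (fun y => c0 ≤ y) v, hlen]
  have : N - (N - i) = i := by omega
  rw [this]

lemma sortedVal_nonneg {N : ℕ} {v : Fin N → ℝ} (hv : ∀ j, 0 ≤ v j) (i : ℕ) :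
    0 ≤ sortedVal v i := by
  rw [sortedVal]
  set L := Multiset.sort (↑(List.ofFn v) : Multiset ℝ) (· ≤ ·) with hL
  rcases lt_or_ge (N - i) L.length with h | h
  · rw [List.getD_eq_getElem L 0 h]
    have hmem : L[N-i] ∈ L := List.getElem_mem _
    have : L[N-i] ∈ (↑(List.ofFn v) : Multiset ℝ) := by
      rw [← Multiset.mem_sort (· ≤ ·)]; exact hmem
    rw [Multiset.mem_coe, List.mem_ofFn] at this
    obtain ⟨j, hj⟩ := this
    rw [← hj]; exact hv j
  · rw [List.getD_eq_default L 0 h]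

lemma card_filter_split {N : ℕ} (k : Fin N) (Q : Fin N → Prop) [DecidablePred Q] :
    (Finset.univ.filter Q).card
      = ((Finset.univ.erase k).filter Q).card + (if Q k then 1 else 0) := by
  have huniv : (Finset.univ : Finset (Fin N)) = insert k (Finset.univ.erase k) := by
    rw [Finset.insert_erase (Finset.mem_univ k)]
  conv_lhs => rw [huniv, Finset.filter_insert]
  by_cases hQ : Q k
  · rw [if_pos hQ, if_pos hQ, Finset.card_insert_of_notMem]
    intro hmem
    exact (Finset.notMem_erase k Finset.univ) (Finset.mem_of_mem_filter k hmem)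
  · rw [if_neg hQ, if_neg hQ, add_zero]

lemma step_sorted (m n : ℕ) (hm : 1 ≤ m) (c : ℝ)
    (hc : (m : ℝ) / (m + n) ≤ c) (hc1 : c < 1)
    (f g : Fin (m+n) → ℝ) (k : Fin (m+n))
    (hfg : ∀ j, j ≠ k → f j = g j)
    (hf0 : ∀ j, 0 ≤ f j) (hg0 : ∀ j, 0 ≤ g j)
    (hX : ((Finset.univ.erase k).filter fun j => g k < f j).card ≤ m - 1) :
    ERM c f ≤ ERM c g := by
  classical
  have hN1 : 1 ≤ m + n := by omega
  have hNr : (0:ℝ) < ((m+n : ℕ) : ℝ) := by exact_mod_cast hN1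
  have hmcN : (m:ℝ) ≤ c * ((m+n : ℕ) : ℝ) := by
    rw [div_le_iff₀ (by push_cast; exact_mod_cast hNr)] at hc
    push_cast at hc ⊢
    linarith
  set C := (Finset.Icc 1 (m+n)).filter (fun i : ℕ => c * ((m+n : ℕ) : ℝ) < (i : ℝ)) with hC
  have hCmem : ∀ i, i ∈ C ↔ (1 ≤ i ∧ i ≤ m+n) ∧ c * ((m+n:ℕ):ℝ) < (i:ℝ) := by
    intro i
    rw [hC, Finset.mem_filter, Finset.mem_Icc]
  have hCsub : ∀ i ∈ C, m + 1 ≤ i ∧ i ≤ m + n := by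
    intro i hi
    rw [hCmem] at hi
    have : (m:ℝ) < (i:ℝ) := lt_of_le_of_lt hmcN hi.2
    have : m < i := by exact_mod_cast this
    omega
  have hNC : m + n ∈ C := by
    rw [hCmem]
    refine ⟨⟨hN1, le_refl _⟩, ?_⟩
    calc c * ((m+n:ℕ):ℝ) < 1 * ((m+n:ℕ):ℝ) := by
          exact mul_lt_mul_of_pos_right hc1 hNr
      _ = ((m+n:ℕ):ℝ) := one_mul _
  have hCconv : ∀ i ∈ C, ∀ t, i ≤ t → t ≤ m+n → t ∈ C := by
    intro i hi t hit htN
    rw [hCmem] at hi ⊢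
    refine ⟨⟨by omega, htN⟩, lt_of_lt_of_le hi.2 (by exact_mod_cast hit)⟩
  -- counting setup
  have hAfg : ∀ c0 : ℝ, ((Finset.univ.erase k).filter fun j => c0 ≤ f j).card
      = ((Finset.univ.erase k).filter fun j => c0 ≤ g j).card := by
    intro c0
    congr 1
    apply Finset.filter_congr
    intro j hj
    rw [hfg j (Finset.ne_of_mem_erase hj)]
  have hBfg : ∀ c0 : ℝ, ((Finset.univ.erase k).filter fun j => f j ≤ c0).card
      = ((Finset.univ.erase k).filter fun j => g j ≤ c0).card := by
    intro c0
    congr 1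
    apply Finset.filter_congr
    intro j hj
    rw [hfg j (Finset.ne_of_mem_erase hj)]
  have hS2f : ∀ i : ℕ, ∀ c0 : ℝ, 1 ≤ i → i ≤ m+n →
      (c0 ≤ sortedVal f i ↔
        i ≤ ((Finset.univ.erase k).filter fun j => c0 ≤ f j).card + (if c0 ≤ f k then 1 else 0)) := by
    intro i c0 h1 h2
    rw [le_sortedVal_iff f h1 h2 c0, card_filter_split k (fun j => c0 ≤ f j)]
  have hS2g : ∀ i : ℕ, ∀ c0 : ℝ, 1 ≤ i → i ≤ m+n →
      (c0 ≤ sortedVal g i ↔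
        i ≤ ((Finset.univ.erase k).filter fun j => c0 ≤ f j).card + (if c0 ≤ g k then 1 else 0)) := by
    intro i c0 h1 h2
    rw [le_sortedVal_iff g h1 h2 c0, card_filter_split k (fun j => c0 ≤ g j), hAfg]
  have hS1f : ∀ i : ℕ, ∀ c0 : ℝ, 1 ≤ i → i ≤ m+n →
      (sortedVal f i ≤ c0 ↔
        (m+n) - i + 1 ≤ ((Finset.univ.erase k).filter fun j => f j ≤ c0).card + (if f k ≤ c0 then 1 else 0)) := by
    intro i c0 h1 h2
    rw [sortedVal_le_iff f h1 h2 c0, card_filter_split k (fun j => f j ≤ c0)]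
  have hS1g : ∀ i : ℕ, ∀ c0 : ℝ, 1 ≤ i → i ≤ m+n →
      (sortedVal g i ≤ c0 ↔
        (m+n) - i + 1 ≤ ((Finset.univ.erase k).filter fun j => f j ≤ c0).card + (if g k ≤ c0 then 1 else 0)) := by
    intro i c0 h1 h2
    rw [sortedVal_le_iff g h1 h2 c0, card_filter_split k (fun j => g j ≤ c0), hBfg]
  -- the main comparison hypotheses
  have Hh2 : ∀ i ∈ C, sortedVal f i ≤ sortedVal g i := by
    intro i hi
    obtain ⟨him, hiN⟩ := hCsub i hi
    have h1i : 1 ≤ i := by omega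
    have h0 := (hS2f i (sortedVal f i) h1i hiN).1 le_rfl
    apply (hS2g i (sortedVal f i) h1i hiN).2
    by_cases hgk : sortedVal f i ≤ g k
    · rw [if_pos hgk]
      split_ifs at h0 <;> omega
    · rw [if_neg hgk]
      push_neg at hgk
      have hsubA : ((Finset.univ.erase k).filter fun j => sortedVal f i ≤ f j)
          ⊆ ((Finset.univ.erase k).filter fun j => g k < f j) := by
        intro j hj
        simp only [Finset.mem_filter] at hj ⊢
        refine ⟨hj.1, ?_⟩
        have hj := hj.2
        exact lt_of_lt_of_le hgk hj
      have hA := le_trans (Finset.card_le_card hsubA) hX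
      split_ifs at h0 <;> omega
  have Hh3 : ∀ i ∈ C, i + 1 ≤ m + n → sortedVal g (i+1) ≤ sortedVal f i := by
    intro i hi hi1
    obtain ⟨him, hiN⟩ := hCsub i hi
    have h1i : 1 ≤ i := by omega
    have h0 := (hS1f i (sortedVal f i) h1i hiN).1 le_rfl
    apply (hS1g (i+1) (sortedVal f i) (by omega) hi1).2
    split_ifs at h0 ⊢ <;> omega
  set e := ((Finset.univ.erase k).filter fun j => f k < f j).card with he
  have hpN : e + 1 ≤ m + n := by
    have h1 : e ≤ (Finset.univ.erase k).card := Finset.card_le_card (Finset.filter_subset _ _)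
    have h2 : (Finset.univ.erase k).card = (m+n) - 1 := by
      rw [Finset.card_erase_of_mem (Finset.mem_univ k), Finset.card_univ, Fintype.card_fin]
    omega
  have Hh4l : ∀ i ∈ C, i < e + 1 → sortedVal f i = sortedVal g (i+1) := by
    intro i hi hie
    obtain ⟨him, hiN⟩ := hCsub i hi
    have h1i : 1 ≤ i := by omega
    have hi1N : i + 1 ≤ m + n := by omega
    refine le_antisymm ?_ (Hh3 i hi hi1N)
    have h0 := (hS2f i (sortedVal f i) h1i hiN).1 le_rfl
    have hAe : i ≤ ((Finset.univ.erase k).filter fun j => sortedVal f i ≤ f j).card := by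
      by_cases hfk : sortedVal f i ≤ f k
      · have hsub : ((Finset.univ.erase k).filter fun j => f k < f j)
            ⊆ ((Finset.univ.erase k).filter fun j => sortedVal f i ≤ f j) := by
          intro j hj
          simp only [Finset.mem_filter] at hj ⊢
          refine ⟨hj.1, ?_⟩
          have hj := hj.2
          exact le_trans hfk (le_of_lt hj)
        have := Finset.card_le_card hsub
        omega
      · rw [if_neg hfk] at h0
        omega
    apply (hS2g (i+1) (sortedVal f i) (by omega) hi1N).2
    have hgk : sortedVal f i ≤ g k := by
      by_contra hgk
      push_neg at hgk
      have hsubA : ((Finset.univ.erase k).filter fun j => sortedVal f i ≤ f j)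
          ⊆ ((Finset.univ.erase k).filter fun j => g k < f j) := by
        intro j hj
        simp only [Finset.mem_filter] at hj ⊢
        refine ⟨hj.1, ?_⟩
        have hj := hj.2
        exact lt_of_lt_of_le hgk hj
      have hA := le_trans (Finset.card_le_card hsubA) hX
      omega
    rw [if_pos hgk]
    omega
  have Hh4r : ∀ i ∈ C, e + 1 < i → sortedVal f i = sortedVal g i := by
    intro i hi hie
    obtain ⟨him, hiN⟩ := hCsub i hi
    have h1i : 1 ≤ i := by omega
    refine le_antisymm (Hh2 i hi) ?_
    have h0 := (hS2g i (sortedVal g i) h1i hiN).1 le_rfl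

    apply (hS2f i (sortedVal g i) h1i hiN).2
    by_cases hfk : sortedVal g i ≤ f k
    · rw [if_pos hfk]
      split_ifs at h0 <;> omega
    · rw [if_neg hfk]
      push_neg at hfk
      have hsub : ((Finset.univ.erase k).filter fun j => sortedVal g i ≤ f j)
          ⊆ ((Finset.univ.erase k).filter fun j => f k < f j) := by
        intro j hj
        simp only [Finset.mem_filter] at hj ⊢
        refine ⟨hj.1, ?_⟩
        have hj := hj.2
        exact lt_of_lt_of_le hfk hj
      have hAe := Finset.card_le_card hsub
      split_ifs at h0 <;> omega
  exact step_abstract (m+n) m C (fun i => sortedVal f i) (fun i => sortedVal g i)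
    hNC hCsub hCconv (fun i _ => sortedVal_nonneg hf0 i) (fun i _ => sortedVal_nonneg hg0 i)
    Hh2 Hh3 ⟨e+1, hpN, Hh4l, Hh4r⟩

lemma ERM_le_top (m n : ℕ) (hm : 1 ≤ m) (hn : 1 ≤ n) (c : ℝ)
    (hc : (m : ℝ) / (m + n) ≤ c) (hc1 : c < 1)
    (w : Fin n → ℝ) (hw : ∀ j, 0 ≤ w j)
    (vbar : Fin m → ℝ) (hvbar : ∀ i j, w j ≤ vbar i)
    (vI : Fin m → ℝ) (hvI : ∀ i, 0 ≤ vI i) :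
    ERM c (Fin.append vI w) ≤ ERM c (Fin.append vbar w) := by
  classical
  have hvbar0 : ∀ i, 0 ≤ vbar i := fun i => le_trans (hw ⟨0, hn⟩) (hvbar i ⟨0, hn⟩)
  set mix : ℕ → Fin m → ℝ := fun t i => if (i:ℕ) < t then vbar i else vI i with hmix
  have hmix0 : mix 0 = vI := by
    funext i; simp [hmix]
  have hmixm : mix m = vbar := by
    funext i; simp [hmix, i.2]
  have hmixpos : ∀ t i, 0 ≤ mix t i := by
    intro t i
    rw [hmix]
    by_cases h : (i:ℕ) < t
    · simpa [h] using hvbar0 i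
    · simpa [h] using hvI i
  have hstep : ∀ t, t < m →
      ERM c (Fin.append (mix t) w) ≤ ERM c (Fin.append (mix (t+1)) w) := by
    intro t ht
    set k : Fin (m+n) := Fin.castAdd n ⟨t, ht⟩ with hk
    apply step_sorted m n hm c hc hc1 _ _ k
    · -- hfg
      intro j
      refine Fin.addCases (fun i => ?_) (fun i => ?_) j
      · intro hik
        rw [Fin.append_left, Fin.append_left]
        have hit : (i:ℕ) ≠ t := by
          intro h
          apply hik
          rw [hk]
          congr 1
          exact Fin.ext h
        simp only [hmix]
        by_cases h1 : (i:ℕ) < t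
        · rw [if_pos h1, if_pos (by omega)]
        · rw [if_neg h1, if_neg (by omega)]
      · intro _
        rw [Fin.append_right, Fin.append_right]
    · intro j
      refine Fin.addCases (fun i => ?_) (fun i => ?_) j
      · rw [Fin.append_left]; exact hmixpos t i
      · rw [Fin.append_right]; exact hw i
    · intro j
      refine Fin.addCases (fun i => ?_) (fun i => ?_) j
      · rw [Fin.append_left]; exact hmixpos (t+1) i
      · rw [Fin.append_right]; exact hw i
    · -- hX
      have hgk : Fin.append (mix (t+1)) w k = vbar ⟨t, ht⟩ := by
        rw [hk, Fin.append_left]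
        simp [hmix]
      have hsub : ((Finset.univ.erase k).filter
            fun j => Fin.append (mix (t+1)) w k < Fin.append (mix t) w j)
          ⊆ ((Finset.univ.filter fun j : Fin (m+n) => (j:ℕ) < m).erase k) := by
        intro j hj
        simp only [Finset.mem_filter, Finset.mem_erase, Finset.mem_univ, true_and] at hj ⊢
        refine ⟨hj.1.1, ?_⟩
        by_contra hjm
        push_neg at hjm
        have hj2 := hj.2
        rw [hgk] at hj2
        have hjeq : j = Fin.natAdd m ⟨(j:ℕ) - m, by omega⟩ := by
          apply Fin.ext
          simp [Fin.natAdd]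
          omega
        rw [hjeq, Fin.append_right] at hj2
        exact absurd hj2 (not_lt.2 (hvbar ⟨t,ht⟩ ⟨(j:ℕ)-m, by omega⟩))
      have hkmem : k ∈ Finset.univ.filter fun j : Fin (m+n) => (j:ℕ) < m := by
        simp only [Finset.mem_filter, Finset.mem_univ, true_and, hk]
        exact ht
      have hcard1 : ((Finset.univ.filter fun j : Fin (m+n) => (j:ℕ) < m).erase k).card
          = (Finset.univ.filter fun j : Fin (m+n) => (j:ℕ) < m).card - 1 :=
        Finset.card_erase_of_mem hkmem
      have hcard2 : (Finset.univ.filter fun j : Fin (m+n) => (j:ℕ) < m).card ≤ m := by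
        have := Finset.card_le_card_of_injOn (f := fun j : Fin (m+n) => (j:ℕ))
          (s := Finset.univ.filter fun j : Fin (m+n) => (j:ℕ) < m)
          (t := Finset.range m) ?_ ?_
        · simpa using this
        · intro j hj
          simp only [Finset.mem_coe, Finset.mem_filter, Finset.mem_univ, true_and] at hj
          simpa using hj
        · intro a _ b _ hab
          exact Fin.val_injective hab
      have := Finset.card_le_card hsub
      omega
  have hchain : ∀ t, t ≤ m →
      ERM c (Fin.append (mix 0) w) ≤ ERM c (Fin.append (mix t) w) := by
    intro t
    induction t with
    | zero => intro _; exact le_refl _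
    | succ s ih =>
      intro hs
      exact le_trans (ih (by omega)) (hstep s (by omega))
  have := hchain m (le_refl m)
  rwa [hmix0, hmixm] at this

end ClaimTwoAux

/-- Claim 2 in the paper. Let `P = ERM^c` with `c ≥ m/N`
(`N = m + n` total samples, `0 ≤ c < 1`). For any nonnegative `w = v_{-I}` and any
`vbar` consisting of `m` values all at least `max w`, the worst-case
incentive-awareness measure equals `δ_I(vbar, w)`:
`δ_m^worst(w) = δ_I(vbar, w)` (independently of the choice of such `vbar`). -/
theorem deltaWorst_attained_at_top (m n : ℕ) (c : ℝ)
    (hc : (m : ℝ) / (m + n) ≤ c) (hc1 : c < 1)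
    (w : Fin n → ℝ) (hw : ∀ j, 0 ≤ w j)
    (vbar : Fin m → ℝ) (hvbar : ∀ i j, w j ≤ vbar i) :
    deltaWorstA c m w = deltaIA c vbar w := by
  classical
  rcases Nat.eq_zero_or_pos m with hm0 | hm
  · subst hm0
    have hD : {x : ℝ | ∃ vI : Fin 0 → ℝ, (∀ i, 0 ≤ vI i) ∧ x = deltaIA c vI w}
        = {deltaIA c vbar w} := by
      ext x
      simp only [Set.mem_setOf_eq, Set.mem_singleton_iff]
      constructor
      · rintro ⟨vI, _, rfl⟩
        rw [Subsingleton.elim vI vbar]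
      · rintro rfl
        exact ⟨vbar, fun i => i.elim0, rfl⟩
    rw [deltaWorstA, hD, csSup_singleton]
  rcases Nat.eq_zero_or_pos n with hn0 | hn
  · exfalso
    subst hn0
    rw [Nat.cast_zero, add_zero, div_self (by exact_mod_cast hm.ne' : (m:ℝ) ≠ 0)] at hc
    linarith
  have hvbar0 : ∀ i, 0 ≤ vbar i := fun i => le_trans (hw ⟨0, hn⟩) (hvbar i ⟨0, hn⟩)
  have happ0 : ∀ (b : Fin m → ℝ), (∀ i, 0 ≤ b i) → ∀ j, 0 ≤ Fin.append b w j := by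
    intro b hb j
    refine Fin.addCases (fun i => ?_) (fun i => ?_) j
    · rw [Fin.append_left]; exact hb i
    · rw [Fin.append_right]; exact hw i
  set A := {p : ℝ | ∃ b : Fin m → ℝ, (∀ i, 0 ≤ b i) ∧ p = ERM c (Fin.append b w)} with hA
  have hA0 : ∀ p ∈ A, 0 ≤ p := by
    rintro p ⟨b, hb, rfl⟩
    exact sortedVal_nonneg (happ0 b hb) _
  have hAne : A.Nonempty := ⟨ERM c (Fin.append vbar w), vbar, hvbar0, rfl⟩
  have hbdd : BddBelow A := ⟨0, fun p hp => hA0 p hp⟩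
  have hSnn : 0 ≤ sInf A := Real.sInf_nonneg hA0
  have hkey : ∀ vI : Fin m → ℝ, (∀ i, 0 ≤ vI i) →
      deltaIA c vI w ≤ deltaIA c vbar w := by
    intro vI hvI
    rw [deltaIA, deltaIA, ← hA]
    apply sub_le_sub_left
    have hle := ERM_le_top m n hm hn c hc hc1 w hw vbar hvbar vI hvI
    rcases eq_or_lt_of_le hSnn with hS0 | hSpos
    · rw [← hS0, zero_div, zero_div]
    · have hSle : sInf A ≤ ERM c (Fin.append vI w) := csInf_le hbdd ⟨vI, hvI, rfl⟩
      have hEIpos : 0 < ERM c (Fin.append vI w) := lt_of_lt_of_le hSpos hSle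
      exact div_le_div_of_nonneg_left hSnn hEIpos hle
  have hgreat : IsGreatest {x : ℝ | ∃ vI : Fin m → ℝ, (∀ i, 0 ≤ vI i) ∧ x = deltaIA c vI w}
      (deltaIA c vbar w) := by
    constructor
    · exact ⟨vbar, hvbar0, rfl⟩
    · rintro x ⟨vI, hvI, rfl⟩
      exact hkey vI hvI
  rw [deltaWorstA]
  exact hgreat.csSup_eq
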